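/- For every integer j ≥ 2 with j ≠ 4, the 'reduced cost' −C_j + j·C_4/4 is strictly positive, where C_j = H_{j-1,1}^2/H_{j-1,2}. -/

import Mathlib

noncomputable def H (m j : ℕ) : ℝ := ∑ i ∈ Finset.Icc 1 m, (1 : ℝ) / (i : ℝ) ^ j

noncomputable def C (n : ℕ) : ℝ := (H (n - 1) 1) ^ 2 / H (n - 1) 2

lemma H_eq (m j : ℕ) : H m j = ∑ i ∈ Finset.range m, (1 : ℝ) / ((i:ℝ)+1) ^ j := by
  rw [H, ← Finset.Ico_add_one_right_eq_Icc, Finset.sum_Ico_eq_sum_range]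
  norm_num [add_comm]

lemma H1_eq_harmonic (m : ℕ) : H m 1 = (harmonic m : ℝ) := by
  rw [H, harmonic_eq_sum_Icc]
  push_cast
  simp [one_div]

lemma H1_le (m : ℕ) : H m 1 ≤ 1 + Real.log m := by
  rw [H1_eq_harmonic]; exact_mod_cast harmonic_le_one_add_log m

lemma H1_nonneg (m : ℕ) : 0 ≤ H m 1 := by
  rw [H]; positivity

lemma H2_ge (m : ℕ) (hm : 40 ≤ m) : (1.62:ℝ) ≤ H m 2 := by
  have h : H 40 2 ≤ H m 2 := by
    rw [H, H]
    apply Finset.sum_le_sum_of_subset_of_nonneg (Finset.Icc_subset_Icc_right hm)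
    intro i _ _; positivity
  refine le_trans ?_ h
  rw [H_eq]
  norm_num [Finset.sum_range_succ]

lemma tail (m : ℕ) (hm : 40 ≤ m) : (H m 1)^2 / H m 2 < 121/196 * ((m:ℝ)+1) := by
  have h2 := H2_ge m hm
  have h1 := H1_nonneg m
  have hm' : (40:ℝ) ≤ (m:ℝ) := by exact_mod_cast hm
  set s := Real.sqrt m with hsdef
  have hs : s^2 = (m:ℝ) := Real.sq_sqrt (by positivity)
  have hs6 : (6:ℝ) ≤ s := by
    rw [show (6:ℝ) = Real.sqrt 36 by rw [show (36:ℝ) = 6^2 by norm_num, Real.sqrt_sq]; norm_num]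
    exact Real.sqrt_le_sqrt (by linarith)
  have hspos : (0:ℝ) < s := by linarith
  have hlog4 : Real.log (s/4) ≤ s/4 - 1 := Real.log_le_sub_one_of_pos (by positivity)
  have hlog2 : Real.log 2 < 0.6931471808 := Real.log_two_lt_d9
  have hlogs : Real.log s = Real.log (s/4) + 2 * Real.log 2 := by
    rw [show Real.log (s/4) = Real.log s - Real.log 4 from Real.log_div hspos.ne' (by norm_num),
        show (4:ℝ) = 2^2 by norm_num, Real.log_pow]
    push_cast; ring
  have hlogm : Real.log m = 2 * Real.log s := by
    rw [← hs, Real.log_pow]; push_cast; ring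
  have hb : H m 1 ≤ s/2 + 1.7726 := by
    have := H1_le m
    rw [hlogm, hlogs] at this
    linarith
  rw [div_lt_iff₀ (by linarith : (0:ℝ) < H m 2), ← hs]
  nlinarith [sq_nonneg (H m 1), mul_le_mul hb hb h1 (by linarith), sq_nonneg (s-6),
    mul_le_mul_of_nonneg_left h2 (show (0:ℝ) ≤ 121/196*(s^2+1) by positivity)]

lemma hC4 : C 4 = 121/49 := by
  rw [C]
  norm_num [H_eq, Finset.sum_range_succ]

theorem reduced_cost_pos (j : ℕ) (hj : 2 ≤ j) (hne : j ≠ 4) :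
    0 < -C j + (j : ℝ) * C 4 / 4 := by
  rcases lt_or_ge j 41 with h | h
  · interval_cases j
    all_goals first
      | exact absurd rfl hne
      | norm_num [C, H_eq, Finset.sum_range_succ]
  · have hm : 40 ≤ j - 1 := by omega
    have ht := tail (j - 1) hm
    have hc : ((j - 1 : ℕ) : ℝ) + 1 = (j : ℝ) := by
      have : 1 ≤ j := by omega
      push_cast [Nat.cast_sub this]
      ring
    rw [hc] at ht
    rw [hC4, C]
    linarith
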